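/- arXiv:1603.09329 — 4 statements merged into one kernel-verified Lean document; each statement's English description precedes it below -/
import Mathlib

section
/- For every α ∈ ℝ, the set { ζ ∈ ℝ : ζ ∉ {η_1, …, η_m} ∪ {−θ_1, …, −θ_n} and G(ζ) = α } is finite and contains at most m+n+2 elements. -/
open MeasureTheory Real

open Polynomial in
private lemma levy_sum_div_mul_prod {m : ℕ} (η : Fin m → ℝ) (c : Fin m → ℝ) (ζ : ℝ)
    (hζ : ∀ i, ζ ≠ η i) :
    (∑ i, c i * η i / (η i - ζ)) * ∏ i, (ζ - η i)
      = -∑ i, c i * η i * ∏ k ∈ Finset.univ.erase i, (ζ - η k) := by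
  rw [Finset.sum_mul, ← Finset.sum_neg_distrib]
  refine Finset.sum_congr rfl fun i _ => ?_
  rw [← Finset.mul_prod_erase _ _ (Finset.mem_univ i)]
  have h : η i - ζ ≠ 0 := sub_ne_zero.mpr (Ne.symm (hζ i))
  field_simp
  ring

open Polynomial in
private lemma levy_sum_div_mul_prod' {n : ℕ} (θ : Fin n → ℝ) (c : Fin n → ℝ) (ζ : ℝ)
    (hζ : ∀ j, ζ ≠ -θ j) :
    (∑ j, c j * θ j / (θ j + ζ)) * ∏ j, (ζ + θ j)
      = ∑ j, c j * θ j * ∏ k ∈ Finset.univ.erase j, (ζ + θ k) := by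
  rw [Finset.sum_mul]
  refine Finset.sum_congr rfl fun j _ => ?_
  rw [← Finset.mul_prod_erase _ _ (Finset.mem_univ j)]
  have h : θ j + ζ ≠ 0 := fun h0 => hζ j (by linarith)
  field_simp
  ring

/-- For every α ∈ ℝ, the set of ζ ∈ ℝ avoiding the poles
{η₁,…,η_m} ∪ {−θ₁,…,−θ_n} with G(ζ) = α is finite with at most m+n+2 elements. -/
theorem levy_exponent_roots_finite
    (m n : ℕ) (hm : 0 < m) (hn : 0 < n)
    (μ σ lam p_u q_d : ℝ)
    (hσ : 0 < σ) (hlam : 0 < lam)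
    (hpu : 0 ≤ p_u) (hqd : 0 ≤ q_d) (hpq : p_u + q_d = 1)
    (p : Fin m → ℝ) (q : Fin n → ℝ)
    (hp : ∑ i, p i = 1) (hq : ∑ j, q j = 1)
    (η : Fin m → ℝ) (θ : Fin n → ℝ)
    (hη0 : 0 < η ⟨0, hm⟩) (hθ0 : 0 < θ ⟨0, hn⟩)
    (hηmono : StrictMono η) (hθmono : StrictMono θ)
    (G : ℝ → ℝ)
    (hG : ∀ ζ : ℝ, (∀ i, ζ ≠ η i) → (∀ j, ζ ≠ -θ j) →
      G ζ = μ * ζ + σ ^ 2 / 2 * ζ ^ 2 +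
        lam * (p_u * ∑ i, p i * η i / (η i - ζ) +
               q_d * ∑ j, q j * θ j / (θ j + ζ) - 1)) :
    ∀ α : ℝ,
      {ζ : ℝ | (∀ i, ζ ≠ η i) ∧ (∀ j, ζ ≠ -θ j) ∧ G ζ = α}.Finite ∧
      {ζ : ℝ | (∀ i, ζ ≠ η i) ∧ (∀ j, ζ ≠ -θ j) ∧ G ζ = α}.ncard ≤ m + n + 2 := by
  classical
  intro α
  open Polynomial in
  set Dη : Polynomial ℝ := ∏ i, (X - C (η i)) with hDη_def
  set Dθ : Polynomial ℝ := ∏ j, (X + C (θ j)) with hDθ_def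
  set Sη : Polynomial ℝ := ∑ i, C (p i * η i) * ∏ k ∈ Finset.univ.erase i, (X - C (η k)) with hSη_def
  set Sθ : Polynomial ℝ := ∑ j, C (q j * θ j) * ∏ k ∈ Finset.univ.erase j, (X + C (θ k)) with hSθ_def
  set Qd : Polynomial ℝ := C (σ^2/2) * X^2 + C μ * X - C (lam + α) with hQd_def
  set P : Polynomial ℝ := Qd * (Dη * Dθ)
      - C (lam * p_u) * Sη * Dθ + C (lam * q_d) * Sθ * Dη with hP_def
  -- degree facts
  have hDηm : Dη.Monic := monic_prod_of_monic _ _ fun i _ => monic_X_sub_C _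
  have hDθm : Dθ.Monic := monic_prod_of_monic _ _ fun j _ => monic_X_add_C _
  have hDηdeg : Dη.natDegree = m := by
    rw [hDη_def, natDegree_prod_of_monic _ _ fun i _ => monic_X_sub_C _]
    simp [natDegree_X_sub_C]
  have hDθdeg : Dθ.natDegree = n := by
    rw [hDθ_def, natDegree_prod_of_monic _ _ fun j _ => monic_X_add_C _]
    simp [natDegree_X_add_C]
  have hσ2 : σ^2/2 ≠ 0 := by positivity
  have hQdeg : Qd.natDegree = 2 := by
    rw [hQd_def]; compute_degree!
    exact hσ.ne'
  have hQlead : Qd.leadingCoeff = σ^2/2 := by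
    rw [leadingCoeff, hQdeg, hQd_def]
    simp [coeff_C, coeff_X]
  have hSηdeg : Sη.natDegree ≤ m := by
    rw [hSη_def]
    refine natDegree_sum_le_of_forall_le _ _ fun i _ => ?_
    refine (natDegree_mul_le).trans ?_
    simp only [natDegree_C, zero_add]
    refine (natDegree_prod_le _ _).trans ?_
    calc ∑ k ∈ Finset.univ.erase i, (X - C (η k)).natDegree
        = ∑ k ∈ Finset.univ.erase i, 1 := by simp [natDegree_X_sub_C]
      _ ≤ m := by simp [Finset.card_erase_of_mem]
  have hSθdeg : Sθ.natDegree ≤ n := by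
    rw [hSθ_def]
    refine natDegree_sum_le_of_forall_le _ _ fun j _ => ?_
    refine (natDegree_mul_le).trans ?_
    simp only [natDegree_C, zero_add]
    refine (natDegree_prod_le _ _).trans ?_
    calc ∑ k ∈ Finset.univ.erase j, (X + C (θ k)).natDegree
        = ∑ k ∈ Finset.univ.erase j, 1 := by simp [natDegree_X_add_C]
      _ ≤ n := by simp [Finset.card_erase_of_mem]
  have hMm : (Dη * Dθ).Monic := hDηm.mul hDθm
  have hMdeg : (Dη * Dθ).natDegree = m + n := by
    rw [hDηm.natDegree_mul hDθm, hDηdeg, hDθdeg]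
  have hT1coeff : (Qd * (Dη * Dθ)).coeff (m + n + 2) = σ^2/2 := by
    have := coeff_mul_degree_add_degree Qd (Dη * Dθ)
    rw [hQdeg, hMdeg, hQlead, hMm.leadingCoeff, mul_one] at this
    rw [show m + n + 2 = 2 + (m + n) by ring, this]
  have hT2deg : (C (lam * p_u) * Sη * Dθ).natDegree < m + n + 2 := by
    calc (C (lam * p_u) * Sη * Dθ).natDegree
        ≤ (C (lam * p_u) * Sη).natDegree + Dθ.natDegree := natDegree_mul_le
      _ ≤ (natDegree (C (lam * p_u)) + Sη.natDegree) + Dθ.natDegree :=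
          Nat.add_le_add_right natDegree_mul_le _
      _ ≤ (0 + m) + n := by
          rw [natDegree_C, hDθdeg]; exact Nat.add_le_add_right (Nat.add_le_add_left hSηdeg _) _
      _ < m + n + 2 := by omega
  have hT3deg : (C (lam * q_d) * Sθ * Dη).natDegree < m + n + 2 := by
    calc (C (lam * q_d) * Sθ * Dη).natDegree
        ≤ (C (lam * q_d) * Sθ).natDegree + Dη.natDegree := natDegree_mul_le
      _ ≤ (natDegree (C (lam * q_d)) + Sθ.natDegree) + Dη.natDegree :=
          Nat.add_le_add_right natDegree_mul_le _
      _ ≤ (0 + n) + m := by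
          rw [natDegree_C, hDηdeg]; exact Nat.add_le_add_right (Nat.add_le_add_left hSθdeg _) _
      _ < m + n + 2 := by omega
  have hPcoeff : P.coeff (m + n + 2) = σ^2/2 := by
    rw [hP_def, coeff_add, coeff_sub, hT1coeff,
      coeff_eq_zero_of_natDegree_lt hT2deg, coeff_eq_zero_of_natDegree_lt hT3deg]
    ring
  have hP0 : P ≠ 0 := fun h => hσ2 (by rw [← hPcoeff, h, coeff_zero])
  have hPdeg : P.natDegree ≤ m + n + 2 := by
    rw [hP_def]
    refine (natDegree_add_le _ _).trans
      (max_le ((natDegree_sub_le _ _).trans (max_le ?_ hT2deg.le)) hT3deg.le)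
    exact natDegree_mul_le.trans (by rw [hQdeg, hMdeg]; omega)
  -- evaluation identity on the good set
  have hroot : ∀ ζ : ℝ, (∀ i, ζ ≠ η i) → (∀ j, ζ ≠ -θ j) → G ζ = α → P.IsRoot ζ := by
    intro ζ hζη hζθ hζG
    have hA : (∑ i, p i * η i / (η i - ζ)) * ∏ i, (ζ - η i)
        = -∑ i, p i * η i * ∏ k ∈ Finset.univ.erase i, (ζ - η k) :=
      levy_sum_div_mul_prod η p ζ hζη
    have hB : (∑ j, q j * θ j / (θ j + ζ)) * ∏ j, (ζ + θ j)
        = ∑ j, q j * θ j * ∏ k ∈ Finset.univ.erase j, (ζ + θ k) :=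
      levy_sum_div_mul_prod' θ q ζ hζθ
    have hGval : μ * ζ + σ ^ 2 / 2 * ζ ^ 2 +
        lam * (p_u * ∑ i, p i * η i / (η i - ζ) +
               q_d * ∑ j, q j * θ j / (θ j + ζ) - 1) = α := by
      rw [← hG ζ hζη hζθ]; exact hζG
    have hPeval : P.eval ζ =
        (μ * ζ + σ ^ 2 / 2 * ζ ^ 2 +
          lam * (p_u * ∑ i, p i * η i / (η i - ζ) +
                 q_d * ∑ j, q j * θ j / (θ j + ζ) - 1) - α)
          * (∏ i, (ζ - η i)) * ∏ j, (ζ + θ j) := by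
      have hevP : P.eval ζ =
          (σ^2/2 * ζ^2 + μ * ζ - (lam + α)) * ((∏ i, (ζ - η i)) * ∏ j, (ζ + θ j))
          - lam * p_u * (∑ i, p i * η i * ∏ k ∈ Finset.univ.erase i, (ζ - η k))
              * ∏ j, (ζ + θ j)
          + lam * q_d * (∑ j, q j * θ j * ∏ k ∈ Finset.univ.erase j, (ζ + θ k))
              * ∏ i, (ζ - η i) := by
        simp [hP_def, hQd_def, hDη_def, hDθ_def, hSη_def, hSθ_def,
          eval_prod, eval_finset_sum, Finset.sum_mul]
      rw [hevP]
      linear_combination (-(lam * p_u * ∏ j, (ζ + θ j))) * hA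
        - (lam * q_d * ∏ i, (ζ - η i)) * hB
    rw [IsRoot, hPeval, hGval]
    ring
  set S : Set ℝ := {ζ : ℝ | (∀ i, ζ ≠ η i) ∧ (∀ j, ζ ≠ -θ j) ∧ G ζ = α} with hS_def
  have hsub : S ⊆ {x : ℝ | P.IsRoot x} := by
    rintro ζ ⟨h1, h2, h3⟩
    exact hroot ζ h1 h2 h3
  have hrootsfin : {x : ℝ | P.IsRoot x}.Finite := Polynomial.finite_setOf_isRoot hP0
  have hfin : S.Finite := hrootsfin.subset hsub
  refine ⟨hfin, ?_⟩
  have heq : {x : ℝ | P.IsRoot x} = ↑P.roots.toFinset := by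
    ext x
    simp [Polynomial.mem_roots, hP0, IsRoot]
  calc S.ncard ≤ {x : ℝ | P.IsRoot x}.ncard := Set.ncard_le_ncard hsub hrootsfin
    _ = P.roots.toFinset.card := by rw [heq, Set.ncard_coe_finset]
    _ ≤ Multiset.card P.roots := P.roots.toFinset_card_le
    _ ≤ P.natDegree := P.card_roots'
    _ ≤ m + n + 2 := hPdeg
end

section
/- Let H ∈ ℝ and let β_1, …, β_{m+1} be real numbers satisfying the interlacing condition 0 < β_1 < η_1 < β_2 < η_2 < ⋯ < η_m < β_{m+1}. Then the (m+1)×(m+1) real matrix A^{H} whose first row is (e^{β_1 H}, …, e^{β_{m+1} H}) and whose (k+1)-th row, for k = 1, …, m, is (e^{β_1 H}/(η_k − β_1), …, e^{β_{m+1} H}/(η_k − β_{m+1})), is nonsingular. -/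
open Real Polynomial Finset

/-- If `0 < β₁ < η₁ < β₂ < η₂ < ⋯ < η_m < β_{m+1}`, then the
`(m+1)×(m+1)` matrix whose first row is `(e^{β_j H})_j` and whose `(k+1)`-th
row is `(e^{β_j H}/(η_k − β_j))_j` is nonsingular. -/
theorem one_sided_exit_matrix_nonsingular
    (m : ℕ) (hm : 0 < m)
    (η : Fin m → ℝ) (hη0 : 0 < η ⟨0, hm⟩) (hηmono : StrictMono η)
    (H : ℝ) (β : Fin (m + 1) → ℝ)
    (hβ0 : 0 < β 0)
    (hinter : ∀ k : Fin m, β k.castSucc < η k ∧ η k < β k.succ) :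
    (Matrix.of fun i j : Fin (m + 1) =>
      if _ : (i : ℕ) = 0 then Real.exp (β j * H)
      else Real.exp (β j * H) / (η ⟨(i : ℕ) - 1, by have := i.isLt; omega⟩ - β j)).det
      ≠ 0 := by
  intro hdet
  obtain ⟨v, hv, hmul⟩ := Matrix.exists_mulVec_eq_zero_iff.2 hdet
  have hβmono : StrictMono β := by
    rw [Fin.strictMono_iff_lt_succ]
    intro i
    exact lt_trans (hinter i).1 (hinter i).2
  have hβinj : Function.Injective β := hβmono.injective
  -- η k ≠ β j
  have hne : ∀ (k : Fin m) (j : Fin (m + 1)), η k - β j ≠ 0 := by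
    intro k j
    rcases le_or_gt (j : ℕ) (k : ℕ) with h | h
    · have h1 : β j ≤ β k.castSucc := hβmono.monotone (by simp [Fin.le_def, h])
      have h2 := (hinter k).1
      intro h0
      have : η k = β j := by linarith [sub_eq_zero.mp h0]
      linarith [this ▸ h2]
    · have h1 : β k.succ ≤ β j := hβmono.monotone (by simp [Fin.le_def]; omega)
      have h2 := (hinter k).2
      intro h0
      have : η k = β j := by linarith [sub_eq_zero.mp h0]
      linarith [this ▸ h2]
  set c : Fin (m + 1) → ℝ := fun j => Real.exp (β j * H) * v j with hc
  have hrow : ∀ i, ∑ j, (Matrix.of fun i j : Fin (m + 1) =>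
      if _ : (i : ℕ) = 0 then Real.exp (β j * H)
      else Real.exp (β j * H) / (η ⟨(i : ℕ) - 1, by have := i.isLt; omega⟩ - β j)) i j * v j = 0 := by
    intro i
    have := congrFun hmul i
    simpa [Matrix.mulVec, dotProduct] using this
  have hsum0 : ∑ j, c j = 0 := by
    have := hrow 0
    simpa using this
  have hsumk : ∀ k : Fin m, ∑ j, c j / (η k - β j) = 0 := by
    intro k
    have h := hrow k.succ
    have hik : ((k.succ : Fin (m+1)) : ℕ) ≠ 0 := by simp
    simp only [Matrix.of_apply, Fin.val_succ, Nat.add_sub_cancel, Fin.eta,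
      Nat.succ_ne_zero, dite_false] at h
    rw [← h]
    refine Finset.sum_congr rfl fun j _ => ?_
    rw [hc]
    field_simp
  -- the polynomial P(X) = ∑ c_j ∏_{l≠j} (X - β_l)
  set P : Polynomial ℝ := ∑ j, C (c j) * ∏ l ∈ Finset.univ.erase j, (X - C (β l)) with hPdef
  have hdegprod : ∀ j : Fin (m + 1),
      (∏ l ∈ Finset.univ.erase j, (X - C (β l))).natDegree = m := by
    intro j
    rw [Polynomial.natDegree_prod _ _ fun l _ => Polynomial.X_sub_C_ne_zero (β l)]
    simp [Polynomial.natDegree_X_sub_C, Finset.card_erase_of_mem]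
  have hmonic : ∀ j : Fin (m + 1),
      (∏ l ∈ Finset.univ.erase j, (X - C (β l))).Monic :=
    fun j => monic_prod_of_monic _ _ fun l _ => monic_X_sub_C (β l)
  have hcoeffm : P.coeff m = 0 := by
    rw [hPdef, Polynomial.finset_sum_coeff]
    have hterm : ∀ j : Fin (m + 1),
        (C (c j) * ∏ l ∈ Finset.univ.erase j, (X - C (β l))).coeff m = c j := by
      intro j
      rw [Polynomial.coeff_C_mul]
      have h1 := (hmonic j).coeff_natDegree
      rw [hdegprod j] at h1
      rw [h1, mul_one]
    rw [Finset.sum_congr rfl fun j _ => hterm j]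
    exact hsum0
  have hdegP : P.natDegree ≤ m := by
    rw [hPdef]
    apply Polynomial.natDegree_sum_le_of_forall_le
    intro j _
    exact le_trans (Polynomial.natDegree_C_mul_le _ _) (le_of_eq (hdegprod j))
  have hroot : ∀ k : Fin m, P.eval (η k) = 0 := by
    intro k
    have hk := hsumk k
    rw [hPdef]
    simp only [Polynomial.eval_finset_sum, Polynomial.eval_mul, Polynomial.eval_C,
      Polynomial.eval_prod, Polynomial.eval_sub, Polynomial.eval_X]
    have hterm : ∀ j : Fin (m + 1),
        c j * ∏ l ∈ Finset.univ.erase j, (η k - β l)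
          = (c j / (η k - β j)) * ∏ l, (η k - β l) := by
      intro j
      rw [← Finset.mul_prod_erase _ _ (Finset.mem_univ j), div_mul_eq_mul_div,
        mul_comm (η k - β j), ← mul_assoc, mul_div_assoc, div_self (hne k j), mul_one]
    rw [Finset.sum_congr rfl fun j _ => hterm j, ← Finset.sum_mul, hk, zero_mul]
  have hP0 : P = 0 := by
    by_contra hP0
    have h1 : P.natDegree < m := by
      rcases lt_or_eq_of_le hdegP with h | h
      · exact h
      · exfalso
        have := Polynomial.leadingCoeff_ne_zero.2 hP0
        rw [Polynomial.leadingCoeff, h, hcoeffm] at this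
        exact this rfl
    have h2 : (Finset.univ.image η) ⊆ P.roots.toFinset := by
      intro x hx
      obtain ⟨k, _, rfl⟩ := Finset.mem_image.1 hx
      rw [Multiset.mem_toFinset, Polynomial.mem_roots hP0]
      exact hroot k
    have h3 : m ≤ P.roots.toFinset.card := by
      calc m = (Finset.univ.image η).card := by
              rw [Finset.card_image_of_injective _ hηmono.injective, Finset.card_univ,
                Fintype.card_fin]
        _ ≤ P.roots.toFinset.card := Finset.card_le_card h2
    have h4 : P.roots.toFinset.card ≤ P.natDegree :=
      le_trans (Multiset.toFinset_card_le _) (Polynomial.card_roots' P)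
    omega
  have hcj : ∀ j, c j = 0 := by
    intro j
    have hev := congrArg (Polynomial.eval (β j)) hP0
    rw [hPdef] at hev
    simp only [Polynomial.eval_finset_sum, Polynomial.eval_mul, Polynomial.eval_C,
      Polynomial.eval_prod, Polynomial.eval_sub, Polynomial.eval_X,
      Polynomial.eval_zero] at hev
    rw [Finset.sum_eq_single j] at hev
    · have hprod : ∏ l ∈ Finset.univ.erase j, (β j - β l) ≠ 0 := by
        rw [Finset.prod_ne_zero_iff]
        intro l hl
        exact sub_ne_zero_of_ne fun e => (Finset.mem_erase.1 hl).1 (hβinj e.symm)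
      exact (mul_eq_zero.1 hev).resolve_right hprod
    · intro i _ hij
      apply mul_eq_zero_of_right
      exact Finset.prod_eq_zero (Finset.mem_erase.2 ⟨hij.symm, Finset.mem_univ j⟩)
        (sub_self (β j))
    · intro h; exact absurd (Finset.mem_univ j) h
  apply hv
  funext j
  have hj := hcj j
  rw [hc] at hj
  simp only at hj
  have := (mul_eq_zero.1 hj).resolve_left (Real.exp_ne_zero (β j * H))
  simpa using this
end

section
/- (Explicit solution of the bordered Cauchy system.) Let a_1, …, a_S be pairwise distinct real numbers with a_i ∉ {η_1, …, η_m} ∪ {−θ_1, …, −θ_n} for every i, and let γ ∈ ℝ with γ ∉ {η_1, …, η_m} ∪ {−θ_1, …, −θ_n}. Let Δ be the column vector ( 1, γ, 1/(η_1 − γ), …, 1/(η_m − γ), 1/(θ_1 + γ), …, 1/(θ_n + γ) ). Then the matrix A(a) is invertible and the unique solution Y* = (y*_1, …, y*_S) of the linear system A(a) Y = Δ is given, for i = 1, …, S, by y*_i = [ ∏_{j ≠ i} (a_j − γ) · ∏_{k=1}^{m} (η_k − a_i) · ∏_{l=1}^{n} (θ_l + a_i) ] / [ ∏_{j ≠ i}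 (a_j − a_i) · ∏_{k=1}^{m} (η_k − γ) · ∏_{l=1}^{n} (θ_l + γ) ]. -/
open Real

/-- The bordered Cauchy matrix `A(a)`: rows are `(1,…,1)`, `(a_1,…,a_S)`,
the `m` rows `(1/(η_k − a_j))_j` and the `n` rows `(1/(θ_l + a_j))_j`,
where `S = m+n+2`. -/
noncomputable def borderedCauchy (m n : ℕ) (η : Fin m → ℝ) (θ : Fin n → ℝ)
    (a : Fin (m + n + 2) → ℝ) : Matrix (Fin (m + n + 2)) (Fin (m + n + 2)) ℝ :=
  Matrix.of fun i j =>
    if h0 : (i : ℕ) = 0 then 1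
    else if h1 : (i : ℕ) = 1 then a j
    else if hi : (i : ℕ) < m + 2 then 1 / (η ⟨(i : ℕ) - 2, by omega⟩ - a j)
    else 1 / (θ ⟨(i : ℕ) - 2 - m, by have := i.isLt; omega⟩ + a j)

/-- The right-hand side vector
`Δ = (1, γ, 1/(η_1 − γ), …, 1/(η_m − γ), 1/(θ_1 + γ), …, 1/(θ_n + γ))`. -/
noncomputable def deltaVec (m n : ℕ) (η : Fin m → ℝ) (θ : Fin n → ℝ) (γ : ℝ) :
    Fin (m + n + 2) → ℝ := fun i =>
  if h0 : (i : ℕ) = 0 then 1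
  else if h1 : (i : ℕ) = 1 then γ
  else if hi : (i : ℕ) < m + 2 then 1 / (η ⟨(i : ℕ) - 2, by omega⟩ - γ)
  else 1 / (θ ⟨(i : ℕ) - 2 - m, by have := i.isLt; omega⟩ + γ)

namespace BCaux

open Polynomial Finset

/-! ### Entry reduction lemmas -/

variable {m n : ℕ} {η : Fin m → ℝ} {θ : Fin n → ℝ} {a : Fin (m + n + 2) → ℝ} {γ : ℝ}

lemma bc_row0 (i : Fin (m+n+2)) (hi : (i:ℕ) = 0) (j) :
    borderedCauchy m n η θ a i j = 1 := by
  simp only [borderedCauchy, Matrix.of_apply]; rw [dif_pos hi]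

lemma bc_row1 (i : Fin (m+n+2)) (hi : (i:ℕ) = 1) (j) :
    borderedCauchy m n η θ a i j = a j := by
  simp only [borderedCauchy, Matrix.of_apply]; rw [dif_neg (by omega), dif_pos hi]

lemma bc_rowEta (i : Fin (m+n+2)) (k : Fin m) (hi : (i:ℕ) = (k:ℕ) + 2) (j) :
    borderedCauchy m n η θ a i j = 1 / (η k - a j) := by
  simp only [borderedCauchy, Matrix.of_apply]
  rw [dif_neg (by omega), dif_neg (by omega), dif_pos (by have := k.isLt; omega)]
  have hk : ∀ (h : (i:ℕ) - 2 < m), (⟨(i:ℕ)-2, h⟩ : Fin m) = k := fun h => by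
    apply Fin.ext; show (i:ℕ)-2 = (k:ℕ); omega
  rw [hk]

lemma bc_rowTheta (i : Fin (m+n+2)) (l : Fin n) (hi : (i:ℕ) = (l:ℕ) + m + 2) (j) :
    borderedCauchy m n η θ a i j = 1 / (θ l + a j) := by
  simp only [borderedCauchy, Matrix.of_apply]
  rw [dif_neg (by omega), dif_neg (by omega), dif_neg (by omega)]
  have hl : ∀ (h : (i:ℕ) - 2 - m < n), (⟨(i:ℕ)-2-m, h⟩ : Fin n) = l := fun h => by
    apply Fin.ext; show (i:ℕ)-2-m = (l:ℕ); omega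
  rw [hl]

lemma dv_row0 (i : Fin (m+n+2)) (hi : (i:ℕ) = 0) :
    deltaVec m n η θ γ i = 1 := by
  simp only [deltaVec]; rw [dif_pos hi]

lemma dv_row1 (i : Fin (m+n+2)) (hi : (i:ℕ) = 1) :
    deltaVec m n η θ γ i = γ := by
  simp only [deltaVec]; rw [dif_neg (by omega), dif_pos hi]

lemma dv_rowEta (i : Fin (m+n+2)) (k : Fin m) (hi : (i:ℕ) = (k:ℕ) + 2) :
    deltaVec m n η θ γ i = 1 / (η k - γ) := by
  simp only [deltaVec]
  rw [dif_neg (by omega), dif_neg (by omega), dif_pos (by have := k.isLt; omega)]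
  have hk : ∀ (h : (i:ℕ) - 2 < m), (⟨(i:ℕ)-2, h⟩ : Fin m) = k := fun h => by
    apply Fin.ext; show (i:ℕ)-2 = (k:ℕ); omega
  rw [hk]

lemma dv_rowTheta (i : Fin (m+n+2)) (l : Fin n) (hi : (i:ℕ) = (l:ℕ) + m + 2) :
    deltaVec m n η θ γ i = 1 / (θ l + γ) := by
  simp only [deltaVec]
  rw [dif_neg (by omega), dif_neg (by omega), dif_neg (by omega)]
  have hl : ∀ (h : (i:ℕ) - 2 - m < n), (⟨(i:ℕ)-2-m, h⟩ : Fin n) = l := fun h => by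
    apply Fin.ext; show (i:ℕ)-2-m = (l:ℕ); omega
  rw [hl]

/-! ### The weight polynomial -/

noncomputable def Wpoly (η : Fin m → ℝ) (θ : Fin n → ℝ) : ℝ[X] :=
  (∏ k, (C (η k) - X)) * ∏ l, (C (θ l) + X)

lemma evalW (x : ℝ) :
    (Wpoly η θ).eval x = (∏ k, (η k - x)) * ∏ l, (θ l + x) := by
  simp [Wpoly, eval_prod]

lemma degree_CsubX (c : ℝ) : (C c - X : ℝ[X]).degree = 1 := by
  rw [← neg_sub, degree_neg, degree_X_sub_C]

lemma degree_CaddX (c : ℝ) : (C c + X : ℝ[X]).degree = 1 := by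
  rw [add_comm, degree_X_add_C]

lemma degW : (Wpoly η θ).degree = ((m + n : ℕ) : WithBot ℕ) := by
  rw [Wpoly, degree_mul, degree_prod, degree_prod]
  simp only [degree_CsubX, degree_CaddX, Finset.sum_const, Finset.card_univ, Fintype.card_fin,
    nsmul_eq_mul, mul_one]
  push_cast; ring

lemma Wne : Wpoly η θ ≠ 0 := by
  intro h
  have h2 := degW (η := η) (θ := θ)
  rw [h, degree_zero] at h2
  exact absurd h2.symm (by exact_mod_cast WithBot.natCast_ne_bot _)

/-! ### Lagrange interpolation summation -/

lemma lag_sum {S : ℕ} (a : Fin S → ℝ) (ha : Function.Injective a) (γ : ℝ)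
    (f : ℝ[X]) (hf : f.degree < (S : ℕ)) :
    ∑ i, f.eval (a i) * (Lagrange.basis Finset.univ a i).eval γ = f.eval γ := by
  have h := Lagrange.eq_interpolate (s := (Finset.univ : Finset (Fin S))) (v := a)
      (ha.injOn) (by simpa using hf)
  conv_rhs => rw [h]
  rw [Lagrange.interpolate_apply, eval_finset_sum]
  simp

lemma row_identity {S : ℕ} (a : Fin S → ℝ) (γ : ℝ) (ha : Function.Injective a)
    (W : ℝ[X]) (hWγ : W.eval γ ≠ 0) (f : ℝ → ℝ) (p : ℝ[X])
    (hdeg : p.degree < (S : ℕ))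
    (hpa : ∀ j : Fin S, p.eval (a j) = f (a j) * W.eval (a j))
    (hpγ : p.eval γ = f γ * W.eval γ) :
    ∑ j, f (a j) * (W.eval (a j) * (Lagrange.basis Finset.univ a j).eval γ / W.eval γ)
      = f γ := by
  have key := lag_sum a ha γ p hdeg
  have h2 : ∑ j, f (a j) * (W.eval (a j) * (Lagrange.basis Finset.univ a j).eval γ / W.eval γ)
      = (∑ j, p.eval (a j) * (Lagrange.basis Finset.univ a j).eval γ) / W.eval γ := by
    rw [Finset.sum_div]
    refine Finset.sum_congr rfl fun j _ => ?_
    rw [hpa j]; ring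
  rw [h2, key, hpγ, mul_div_assoc, div_self hWγ, mul_one]

lemma yStar_eq (ha : Function.Injective a)
    (hγη : ∀ k, γ ≠ η k) (hγθ : ∀ l, γ ≠ -θ l) (i : Fin (m+n+2)) :
    ((∏ j ∈ Finset.univ.erase i, (a j - γ)) *
         (∏ k, (η k - a i)) * (∏ l, (θ l + a i))) /
        ((∏ j ∈ Finset.univ.erase i, (a j - a i)) *
         (∏ k, (η k - γ)) * (∏ l, (θ l + γ)))
    = (Wpoly η θ).eval (a i) *
        (Lagrange.basis Finset.univ a i).eval γ / (Wpoly η θ).eval γ := by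
  rw [evalW, evalW, Lagrange.basis, eval_prod]
  simp only [Lagrange.basisDivisor, eval_mul, eval_C, eval_sub, eval_X]
  have h1 : ∏ j ∈ Finset.univ.erase i, ((a i - a j)⁻¹ * (γ - a j))
      = (∏ j ∈ Finset.univ.erase i, (a j - γ)) / (∏ j ∈ Finset.univ.erase i, (a j - a i)) := by
    rw [← Finset.prod_div_distrib]
    refine Finset.prod_congr rfl fun j hj => ?_
    have hij : a j - a i ≠ 0 := sub_ne_zero.mpr (fun h => (Finset.mem_erase.mp hj).1 (ha h))
    have hij' : a i - a j ≠ 0 := fun h => hij (by linarith [sub_eq_zero.mp h])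
    field_simp
    ring
  rw [h1]
  have hd : (∏ j ∈ Finset.univ.erase i, (a j - a i)) ≠ 0 := by
    rw [Finset.prod_ne_zero_iff]
    exact fun j hj => sub_ne_zero.mpr (fun h => (Finset.mem_erase.mp hj).1 (ha h))
  have hη : (∏ k, (η k - γ)) ≠ 0 := by
    rw [Finset.prod_ne_zero_iff]
    exact fun k _ => sub_ne_zero.mpr (fun h => hγη k h.symm)
  have hθ : (∏ l, (θ l + γ)) ≠ 0 := by
    rw [Finset.prod_ne_zero_iff]
    intro l _ h
    exact hγθ l (by linarith)
  field_simp


lemma hWgamma (hγη : ∀ k, γ ≠ η k) (hγθ : ∀ l, γ ≠ -θ l) :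
    (Wpoly η θ).eval γ ≠ 0 := by
  rw [evalW]
  apply mul_ne_zero
  · rw [Finset.prod_ne_zero_iff]
    exact fun k _ => sub_ne_zero.mpr (fun h => hγη k h.symm)
  · rw [Finset.prod_ne_zero_iff]
    intro l _ h
    exact hγθ l (by linarith)

lemma mulVec_yStar (ha : Function.Injective a)
    (haη : ∀ (i : Fin (m+n+2)) (k : Fin m), a i ≠ η k)
    (haθ : ∀ (i : Fin (m+n+2)) (l : Fin n), a i ≠ -θ l)
    (hγη : ∀ k, γ ≠ η k) (hγθ : ∀ l, γ ≠ -θ l) :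
    (borderedCauchy m n η θ a).mulVec (fun i =>
      (Wpoly η θ).eval (a i) * (Lagrange.basis Finset.univ a i).eval γ / (Wpoly η θ).eval γ)
      = deltaVec m n η θ γ := by
  have hWγ : (Wpoly η θ).eval γ ≠ 0 := hWgamma hγη hγθ
  funext r
  simp only [Matrix.mulVec, dotProduct]
  by_cases hr0 : (r:ℕ) = 0
  · simp only [bc_row0 r hr0, dv_row0 r hr0]
    refine row_identity a γ ha _ hWγ (fun _ => 1) (Wpoly η θ) ?_ (fun j => by ring) (by ring)
    rw [degW]; exact Nat.cast_lt.mpr (by omega)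
  by_cases hr1 : (r:ℕ) = 1
  · simp only [bc_row1 r hr1, dv_row1 r hr1]
    refine row_identity a γ ha _ hWγ (fun x => x) (X * Wpoly η θ) ?_
      (fun j => by simp [eval_mul]) (by simp [eval_mul])
    rw [degree_mul, degree_X, degW]
    have h1 : (1 : WithBot ℕ) + ((m+n:ℕ) : WithBot ℕ) = ((m+n+1:ℕ) : WithBot ℕ) := by
      push_cast; ring
    rw [h1]; exact Nat.cast_lt.mpr (by omega)
  by_cases hr2 : (r:ℕ) < m + 2
  · set k : Fin m := ⟨(r:ℕ) - 2, by omega⟩ with hk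
    have hik : (r:ℕ) = (k:ℕ) + 2 := by simp [hk]; omega
    simp only [bc_rowEta r k hik, dv_rowEta r k hik]
    set p : ℝ[X] := (∏ k' ∈ Finset.univ.erase k, (C (η k') - X)) * ∏ l, (C (θ l) + X) with hp
    have hW : (C (η k) - X) * p = Wpoly η θ := by
      rw [hp, Wpoly, ← Finset.mul_prod_erase Finset.univ _ (Finset.mem_univ k), mul_assoc]
    have heval : ∀ x : ℝ, η k - x ≠ 0 →
        p.eval x = 1 / (η k - x) * (Wpoly η θ).eval x := by
      intro x hx
      have h3 := congrArg (eval x) hW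
      rw [eval_mul] at h3
      simp only [eval_sub, eval_C, eval_X] at h3
      field_simp
      linarith [h3]
    refine row_identity a γ ha _ hWγ (fun x => 1 / (η k - x)) p ?_
      (fun j => heval _ (sub_ne_zero.mpr fun h => haη j k h.symm))
      (heval _ (sub_ne_zero.mpr fun h => hγη k h.symm))
    refine lt_of_le_of_lt (degree_le_of_dvd (Dvd.intro_left _ hW) Wne) ?_
    rw [degW]; exact Nat.cast_lt.mpr (by omega)
  · set l : Fin n := ⟨(r:ℕ) - 2 - m, by have := r.isLt; omega⟩ with hl
    have hil : (r:ℕ) = (l:ℕ) + m + 2 := by simp [hl]; omega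
    simp only [bc_rowTheta r l hil, dv_rowTheta r l hil]
    set p : ℝ[X] := (∏ k, (C (η k) - X)) * ∏ l' ∈ Finset.univ.erase l, (C (θ l') + X) with hp
    have hW : (C (θ l) + X) * p = Wpoly η θ := by
      rw [hp, Wpoly, ← Finset.mul_prod_erase Finset.univ _ (Finset.mem_univ l)]
      ring
    have heval : ∀ x : ℝ, θ l + x ≠ 0 →
        p.eval x = 1 / (θ l + x) * (Wpoly η θ).eval x := by
      intro x hx
      have h3 := congrArg (eval x) hW
      rw [eval_mul] at h3
      simp only [eval_add, eval_C, eval_X] at h3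
      field_simp
      linarith [h3]
    refine row_identity a γ ha _ hWγ (fun x => 1 / (θ l + x)) p ?_
      (fun j => heval _ (fun h => haθ j l (by linarith)))
      (heval _ (fun h => hγθ l (by linarith)))
    refine lt_of_le_of_lt (degree_le_of_dvd (Dvd.intro_left _ hW) Wne) ?_
    rw [degW]; exact Nat.cast_lt.mpr (by omega)


lemma kernel_trivial (hm : 0 < m) (hn : 0 < n)
    (hη0 : 0 < η ⟨0, hm⟩) (hθ0 : 0 < θ ⟨0, hn⟩)
    (hηmono : StrictMono η) (hθmono : StrictMono θ)
    (ha : Function.Injective a)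
    (haη : ∀ (i : Fin (m+n+2)) (k : Fin m), a i ≠ η k)
    (haθ : ∀ (i : Fin (m+n+2)) (l : Fin n), a i ≠ -θ l)
    (Y : Fin (m+n+2) → ℝ)
    (hY : (borderedCauchy m n η θ a).mulVec Y = 0) : Y = 0 := by
  have hrow : ∀ r : Fin (m+n+2), ∑ j, borderedCauchy m n η θ a r j * Y j = 0 := by
    intro r
    have := congrFun hY r
    simpa [Matrix.mulVec, dotProduct] using this
  have h0 : ∑ j, Y j = 0 := by
    have h := hrow ⟨0, by omega⟩
    have e : ∀ j, borderedCauchy m n η θ a ⟨0, by omega⟩ j * Y j = Y j := fun j => by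
      rw [bc_row0 _ rfl, one_mul]
    rwa [Finset.sum_congr rfl (fun j _ => e j)] at h
  have h1 : ∑ j, a j * Y j = 0 := by
    have h := hrow ⟨1, by omega⟩
    have e : ∀ j, borderedCauchy m n η θ a ⟨1, by omega⟩ j * Y j = a j * Y j := fun j => by
      rw [bc_row1 _ rfl]
    rwa [Finset.sum_congr rfl (fun j _ => e j)] at h
  have hk : ∀ k : Fin m, ∑ j, (η k - a j)⁻¹ * Y j = 0 := by
    intro k
    have h := hrow ⟨(k:ℕ) + 2, by have := k.isLt; omega⟩
    have e : ∀ j, borderedCauchy m n η θ a ⟨(k:ℕ) + 2, by have := k.isLt; omega⟩ j * Y j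
        = (η k - a j)⁻¹ * Y j := fun j => by
      rw [bc_rowEta _ k rfl, one_div]
    rwa [Finset.sum_congr rfl (fun j _ => e j)] at h
  have hl : ∀ l : Fin n, ∑ j, (θ l + a j)⁻¹ * Y j = 0 := by
    intro l
    have h := hrow ⟨(l:ℕ) + m + 2, by have := l.isLt; omega⟩
    have e : ∀ j, borderedCauchy m n η θ a ⟨(l:ℕ) + m + 2, by have := l.isLt; omega⟩ j * Y j
        = (θ l + a j)⁻¹ * Y j := fun j => by
      rw [bc_rowTheta _ l rfl, one_div]
    rwa [Finset.sum_congr rfl (fun j _ => e j)] at h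
  -- the interpolation polynomial
  set P : ℝ[X] := ∑ j, C (Y j) * ∏ j' ∈ Finset.univ.erase j, (X - C (a j')) with hP
  have hMdeg : ∀ j : Fin (m+n+2),
      (∏ j' ∈ Finset.univ.erase j, (X - C (a j')) : ℝ[X]).natDegree = m + n + 1 := by
    intro j
    rw [natDegree_prod _ _ (fun j' _ => X_sub_C_ne_zero (a j'))]
    simp [Finset.card_erase_of_mem]
  have hMmonic : ∀ j : Fin (m+n+2),
      (∏ j' ∈ Finset.univ.erase j, (X - C (a j')) : ℝ[X]).Monic :=
    fun j => monic_prod_of_monic _ _ (fun j' _ => monic_X_sub_C (a j'))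
  -- coefficient m+n+1 vanishes
  have hc1 : P.coeff (m + n + 1) = 0 := by
    rw [hP, finset_sum_coeff]
    have : ∀ j : Fin (m+n+2),
        (C (Y j) * ∏ j' ∈ Finset.univ.erase j, (X - C (a j'))).coeff (m + n + 1) = Y j := by
      intro j
      rw [coeff_C_mul]
      have := (hMmonic j).coeff_natDegree
      rw [hMdeg j] at this
      rw [this, mul_one]
    rw [Finset.sum_congr rfl (fun j _ => this j)]
    exact h0
  -- coefficient m+n vanishes
  have hc2 : P.coeff (m + n) = 0 := by
    rw [hP, finset_sum_coeff]
    have hstep : ∀ j : Fin (m+n+2),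
        (C (Y j) * ∏ j' ∈ Finset.univ.erase j, (X - C (a j'))).coeff (m + n)
          = Y j * (a j - ∑ j', a j') := by
      intro j
      rw [coeff_C_mul]
      have hnc : (∏ j' ∈ Finset.univ.erase j, (X - C (a j')) : ℝ[X]).nextCoeff
          = -∑ j' ∈ Finset.univ.erase j, a j' := prod_X_sub_C_nextCoeff _
      rw [nextCoeff_of_natDegree_pos (by rw [hMdeg j]; omega), hMdeg j] at hnc
      simp only [Nat.add_sub_cancel] at hnc
      rw [hnc, Finset.sum_erase_eq_sub (Finset.mem_univ j)]
      ring
    rw [Finset.sum_congr rfl (fun j _ => hstep j)]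
    have : ∑ j, Y j * (a j - ∑ j', a j')
        = (∑ j, a j * Y j) - (∑ j', a j') * ∑ j, Y j := by
      rw [Finset.mul_sum, ← Finset.sum_sub_distrib]
      exact Finset.sum_congr rfl fun j _ => by ring
    rw [this, h0, h1, mul_zero, sub_zero]
  -- degree bound
  have hd1 : P.natDegree ≤ m + n + 1 := by
    refine natDegree_sum_le_of_forall_le _ _ fun j _ => ?_
    exact le_trans (natDegree_C_mul_le _ _) (le_of_eq (hMdeg j))
  have hd3 : P.natDegree ≤ m + n - 1 := by
    rw [natDegree_le_iff_coeff_eq_zero]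
    intro d hd
    rcases eq_or_ne d (m + n) with rfl | hne1
    · exact hc2
    rcases eq_or_ne d (m + n + 1) with rfl | hne2
    · exact hc1
    · exact coeff_eq_zero_of_natDegree_lt (by omega)
  -- evaluation at a generic point off the nodes
  have vanish : ∀ c : ℝ, (∀ j, c - a j ≠ 0) →
      (∑ j, (c - a j)⁻¹ * Y j = 0) → P.eval c = 0 := by
    intro c hc hsum
    rw [hP, eval_finset_sum]
    have hterm : ∀ j : Fin (m+n+2),
        eval c (C (Y j) * ∏ j' ∈ Finset.univ.erase j, (X - C (a j')))
          = (∏ j', (c - a j')) * ((c - a j)⁻¹ * Y j) := by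
      intro j
      rw [eval_mul, eval_C, eval_prod]
      simp only [eval_sub, eval_X, eval_C]
      have h2 : ∏ j' ∈ Finset.univ.erase j, (c - a j')
          = (c - a j)⁻¹ * ∏ j', (c - a j') := by
        rw [← Finset.mul_prod_erase Finset.univ _ (Finset.mem_univ j),
          inv_mul_cancel_left₀ (hc j)]
      rw [h2]; ring
    rw [Finset.sum_congr rfl (fun j _ => hterm j), ← Finset.mul_sum, hsum, mul_zero]
  -- positivity of rates
  have hηpos : ∀ k, 0 < η k := fun k =>
    lt_of_lt_of_le hη0 (hηmono.monotone (Fin.mk_le_of_le_val (Nat.zero_le _)))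
  have hθpos : ∀ l, 0 < θ l := fun l =>
    lt_of_lt_of_le hθ0 (hθmono.monotone (Fin.mk_le_of_le_val (Nat.zero_le _)))
  -- the root set
  set sroots : Finset ℝ :=
    (Finset.univ.image η) ∪ (Finset.univ.image (fun l => -θ l)) with hsroots
  have hcard : sroots.card = m + n := by
    rw [hsroots, Finset.card_union_of_disjoint]
    · rw [Finset.card_image_of_injective _ hηmono.injective,
        Finset.card_image_of_injective _ (fun x y hxy => hθmono.injective (by
          have : θ x = θ y := by linarith [neg_injective hxy]
          exact this))]
      simp
    · rw [Finset.disjoint_left]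
      intro x hx hx'
      obtain ⟨k, _, rfl⟩ := Finset.mem_image.mp hx
      obtain ⟨l, _, hlx⟩ := Finset.mem_image.mp hx'
      have := hηpos k
      have := hθpos l
      linarith
  have heval : ∀ x ∈ sroots, P.eval x = 0 := by
    intro x hx
    rcases Finset.mem_union.mp hx with hx | hx
    · obtain ⟨k, _, rfl⟩ := Finset.mem_image.mp hx
      exact vanish _ (fun j => sub_ne_zero.mpr fun h => haη j k h.symm) (hk k)
    · obtain ⟨l, _, rfl⟩ := Finset.mem_image.mp hx
      refine vanish _ (fun j h => haθ j l (by linarith [sub_eq_zero.mp h])) ?_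
      have : ∀ j : Fin (m+n+2), (-θ l - a j)⁻¹ * Y j = -((θ l + a j)⁻¹ * Y j) := by
        intro j
        rw [show -θ l - a j = -(θ l + a j) by ring, inv_neg]
        ring
      rw [Finset.sum_congr rfl (fun j _ => this j), Finset.sum_neg_distrib, hl l, neg_zero]
  have hP0 : P = 0 := by
    refine eq_zero_of_natDegree_lt_card_of_eval_eq_zero' P sroots heval ?_
    rw [hcard]; omega
  -- recover the coordinates
  funext i
  have heva : P.eval (a i) = Y i * ∏ j' ∈ Finset.univ.erase i, (a i - a j') := by
    rw [hP, eval_finset_sum]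
    rw [Finset.sum_eq_single i]
    · rw [eval_mul, eval_C, eval_prod]
      simp only [eval_sub, eval_X, eval_C]
    · intro j _ hji
      rw [eval_mul, eval_prod]
      have : i ∈ Finset.univ.erase j := Finset.mem_erase.mpr ⟨fun h => hji h.symm, Finset.mem_univ i⟩
      rw [Finset.prod_eq_zero this (by simp), mul_zero]
    · intro h; exact absurd (Finset.mem_univ i) h
  rw [hP0, eval_zero] at heva
  have hprod : (∏ j' ∈ Finset.univ.erase i, (a i - a j')) ≠ 0 := by
    rw [Finset.prod_ne_zero_iff]
    exact fun j hj => sub_ne_zero.mpr fun h => (Finset.mem_erase.mp hj).1 (ha h).symm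
  have := (mul_eq_zero.mp heva.symm).resolve_right hprod
  simpa using this

end BCaux

/-- explicit solution of the bordered Cauchy system: `A(a)` is
invertible and the unique solution of `A(a) Y = Δ` is given by
`y*_i = (∏_{j≠i}(a_j − γ) ∏_k(η_k − a_i) ∏_l(θ_l + a_i)) /
        (∏_{j≠i}(a_j − a_i) ∏_k(η_k − γ) ∏_l(θ_l + γ))`. -/
theorem borderedCauchy_system_solution
    (m n : ℕ) (hm : 0 < m) (hn : 0 < n)
    (η : Fin m → ℝ) (θ : Fin n → ℝ)
    (hη0 : 0 < η ⟨0, hm⟩) (hθ0 : 0 < θ ⟨0, hn⟩)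
    (hηmono : StrictMono η) (hθmono : StrictMono θ)
    (a : Fin (m + n + 2) → ℝ)
    (ha : Function.Injective a)
    (haη : ∀ (i : Fin (m + n + 2)) (k : Fin m), a i ≠ η k)
    (haθ : ∀ (i : Fin (m + n + 2)) (l : Fin n), a i ≠ -θ l)
    (γ : ℝ) (hγη : ∀ k : Fin m, γ ≠ η k) (hγθ : ∀ l : Fin n, γ ≠ -θ l) :
    IsUnit (borderedCauchy m n η θ a) ∧
    ∀ Y : Fin (m + n + 2) → ℝ,
      (borderedCauchy m n η θ a).mulVec Y = deltaVec m n η θ γ ↔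
      Y = fun i =>
        ((∏ j ∈ Finset.univ.erase i, (a j - γ)) *
         (∏ k, (η k - a i)) * (∏ l, (θ l + a i))) /
        ((∏ j ∈ Finset.univ.erase i, (a j - a i)) *
         (∏ k, (η k - γ)) * (∏ l, (θ l + γ))) := by
  classical
  have hdet : (borderedCauchy m n η θ a).det ≠ 0 := by
    intro h
    obtain ⟨v, hv0, hv⟩ := (Matrix.exists_mulVec_eq_zero_iff).mpr h
    exact hv0 (BCaux.kernel_trivial hm hn hη0 hθ0 hηmono hθmono ha haη haθ v hv)
  have hUnit : IsUnit (borderedCauchy m n η θ a) :=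
    (Matrix.isUnit_iff_isUnit_det _).mpr (isUnit_iff_ne_zero.mpr hdet)
  refine ⟨hUnit, fun Y => ?_⟩
  have hys : (fun i =>
        ((∏ j ∈ Finset.univ.erase i, (a j - γ)) *
         (∏ k, (η k - a i)) * (∏ l, (θ l + a i))) /
        ((∏ j ∈ Finset.univ.erase i, (a j - a i)) *
         (∏ k, (η k - γ)) * (∏ l, (θ l + γ))))
      = fun i => (BCaux.Wpoly η θ).eval (a i) *
          (Lagrange.basis Finset.univ a i).eval γ / (BCaux.Wpoly η θ).eval γ :=
    funext fun i => BCaux.yStar_eq ha hγη hγθ i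
  have hsolve := BCaux.mulVec_yStar (γ := γ) ha haη haθ hγη hγθ
  constructor
  · intro hsol
    rw [hys]
    have h3 : (borderedCauchy m n η θ a).mulVec
        (Y - fun i => (BCaux.Wpoly η θ).eval (a i) *
          (Lagrange.basis Finset.univ a i).eval γ / (BCaux.Wpoly η θ).eval γ) = 0 := by
      rw [Matrix.mulVec_sub, hsol, hsolve, sub_self]
    have h4 := BCaux.kernel_trivial hm hn hη0 hθ0 hηmono hθmono ha haη haθ _ h3
    exact sub_eq_zero.mp h4
  · intro hY
    rw [hY, hys]
    exact hsolve
end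

section
/- (Uniqueness for the boundary value problem of the integro-differential generator.) Let α > 0, ρ ≥ 0 and h < H be reals. Suppose φ : ℝ → ℝ is bounded and continuous, φ(x) = 0 for all x ∈ (−∞, h] ∪ [H, +∞), φ is twice continuously differentiable on the open interval (h, H), and for every x ∈ (h, H) it satisfies μ φ′(x) + (σ²/2) φ″(x) + λ ∫_ℝ (φ(x+y) − φ(x)) f_Y(y) dy − (α + ρ) φ(x) = 0. Then φ(x) = 0 for all x ∈ ℝ. -/
open MeasureTheory Real

/-- Auxiliary maximum-principle lemma: under the hypotheses of the theorem,
`φ ≤ 0` everywhere. -/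
lemma bvp_aux
    (μ σ lam : ℝ) (hσ : 0 < σ) (hlam : 0 < lam)
    (fY : ℝ → ℝ) (hfY0 : ∀ y : ℝ, 0 ≤ fY y)
    (α ρ : ℝ) (hα : 0 < α) (hρ : 0 ≤ ρ)
    (h H : ℝ) (hhH : h < H)
    (φ : ℝ → ℝ)
    (hφcont : Continuous φ)
    (hφzero : ∀ x : ℝ, x ∉ Set.Ioo h H → φ x = 0)
    (hφsmooth : ContDiffOn ℝ 2 φ (Set.Ioo h H))
    (hφeq : ∀ x ∈ Set.Ioo h H,
      μ * deriv φ x + σ ^ 2 / 2 * deriv (deriv φ) x +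
        lam * (∫ y : ℝ, (φ (x + y) - φ x) * fY y) - (α + ρ) * φ x = 0) :
    ∀ x : ℝ, φ x ≤ 0 := by
  obtain ⟨x₁, hx₁mem, hmax⟩ := isCompact_Icc.exists_isMaxOn
    (Set.nonempty_Icc.mpr hhH.le) hφcont.continuousOn
  by_cases hpos : φ x₁ ≤ 0
  · intro x
    by_cases hx : x ∈ Set.Icc h H
    · exact le_trans (hmax hx) hpos
    · rw [hφzero x (fun hx' => hx (Set.Ioo_subset_Icc_self hx'))]
  · exfalso
    push_neg at hpos
    -- global max
    have hglob : ∀ x : ℝ, φ x ≤ φ x₁ := by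
      intro x
      by_cases hx : x ∈ Set.Icc h H
      · exact hmax hx
      · rw [hφzero x (fun hx' => hx (Set.Ioo_subset_Icc_self hx'))]
        exact hpos.le
    -- x₁ is interior
    have hφh : φ h = 0 := hφzero h (by simp)
    have hφH : φ H = 0 := hφzero H (by simp)
    have hx₁ : x₁ ∈ Set.Ioo h H := by
      rcases hx₁mem with ⟨h1, h2⟩
      constructor
      · rcases lt_or_eq_of_le h1 with hlt | heq
        · exact hlt
        · exfalso; rw [← heq, hφh] at hpos; exact lt_irrefl 0 hpos
      · rcases lt_or_eq_of_le h2 with hlt | heq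
        · exact hlt
        · exfalso; rw [heq, hφH] at hpos; exact lt_irrefl 0 hpos
    have hopen : IsOpen (Set.Ioo h H) := isOpen_Ioo
    have hd1 : ContDiffOn ℝ 1 (deriv φ) (Set.Ioo h H) :=
      hφsmooth.deriv_of_isOpen hopen (by norm_num)
    have hlocmax : IsLocalMax φ x₁ := Filter.Eventually.of_forall hglob
    have hderiv0 : deriv φ x₁ = 0 := hlocmax.deriv_eq_zero
    -- second derivative nonpositive at the max
    have hdd : deriv (deriv φ) x₁ ≤ 0 := by
      by_contra hc
      push_neg at hc
      set g := deriv φ with hg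
      have hgdiff : DifferentiableAt ℝ g x₁ :=
        (hd1.differentiableOn one_ne_zero).differentiableAt (hopen.mem_nhds hx₁)
      have hgder : HasDerivAt g (deriv g x₁) x₁ := hgdiff.hasDerivAt
      have ht := hasDerivAt_iff_tendsto_slope.mp hgder
      have ht' : Filter.Tendsto (slope g x₁) (nhdsWithin x₁ (Set.Ioi x₁))
          (nhds (deriv g x₁)) :=
        ht.mono_left (nhdsWithin_mono _ (fun y hy => ne_of_gt hy))
      have hev : ∀ᶠ y in nhdsWithin x₁ (Set.Ioi x₁), 0 < slope g x₁ y :=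
        ht'.eventually (eventually_gt_nhds hc)
      obtain ⟨u, hu, hsub⟩ := mem_nhdsGT_iff_exists_Ioo_subset.mp hev
      set b := (x₁ + u) / 2 with hbdef
      have hub : x₁ < u := hu
      have hb1 : x₁ < b := by rw [hbdef]; linarith
      have hb2 : b < u := by rw [hbdef]; linarith
      have hmono : StrictMonoOn φ (Set.Icc x₁ b) := by
        apply strictMonoOn_of_deriv_pos (convex_Icc _ _) hφcont.continuousOn
        intro y hy
        rw [interior_Icc] at hy
        have hyI : y ∈ Set.Ioo x₁ u := ⟨hy.1, hy.2.trans hb2⟩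
        have hs : 0 < slope g x₁ y := hsub hyI
        have hyx : 0 < y - x₁ := sub_pos.mpr hy.1
        have hslope : slope g x₁ y = g y / (y - x₁) := by
          rw [slope_def_field, hderiv0]
          ring
        rw [hslope] at hs
        have hgy := mul_pos hs hyx
        rw [div_mul_cancel₀ _ (ne_of_gt hyx)] at hgy
        exact hgy
      have hlt : φ x₁ < φ b :=
        hmono (Set.left_mem_Icc.mpr hb1.le) (Set.right_mem_Icc.mpr hb1.le) hb1
      exact absurd (hglob b) (not_le.mpr hlt)
    -- jump term nonpositive
    have hI : (∫ y : ℝ, (φ (x₁ + y) - φ x₁) * fY y) ≤ 0 :=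
      integral_nonpos fun y =>
        mul_nonpos_of_nonpos_of_nonneg (sub_nonpos.mpr (hglob _)) (hfY0 y)
    have heq := hφeq x₁ hx₁
    rw [hderiv0, mul_zero, zero_add] at heq
    have t1 : σ ^ 2 / 2 * deriv (deriv φ) x₁ ≤ 0 :=
      mul_nonpos_of_nonneg_of_nonpos (by positivity) hdd
    have t2 : lam * (∫ y : ℝ, (φ (x₁ + y) - φ x₁) * fY y) ≤ 0 :=
      mul_nonpos_of_nonneg_of_nonpos hlam.le hI
    have t3 : 0 < (α + ρ) * φ x₁ := mul_pos (by linarith) hpos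
    linarith

/-- uniqueness for the boundary value problem of the
integro-differential generator of the mixed-exponential jump-diffusion: any
bounded continuous `φ` vanishing outside `(h, H)`, twice continuously
differentiable on `(h, H)` and satisfying `(𝓛 − (α+ρ))φ = 0` on `(h, H)`
vanishes identically. -/
theorem bvp_uniqueness
    (m n : ℕ) (hm : 0 < m) (hn : 0 < n)
    (μ σ lam p_u q_d : ℝ)
    (hσ : 0 < σ) (hlam : 0 < lam)
    (hpu : 0 ≤ p_u) (hqd : 0 ≤ q_d) (hpq : p_u + q_d = 1)
    (p : Fin m → ℝ) (q : Fin n → ℝ)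
    (hp : ∑ i, p i = 1) (hq : ∑ j, q j = 1)
    (η : Fin m → ℝ) (θ : Fin n → ℝ)
    (hη0 : 0 < η ⟨0, hm⟩) (hθ0 : 0 < θ ⟨0, hn⟩)
    (hηmono : StrictMono η) (hθmono : StrictMono θ)
    (fY : ℝ → ℝ)
    (hfY : ∀ y : ℝ, fY y =
      if 0 ≤ y then p_u * ∑ i, p i * η i * Real.exp (-(η i * y))
      else q_d * ∑ j, q j * θ j * Real.exp (θ j * y))
    (hfY0 : ∀ y : ℝ, 0 ≤ fY y)
    (α ρ : ℝ) (hα : 0 < α) (hρ : 0 ≤ ρ)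
    (h H : ℝ) (hhH : h < H)
    (φ : ℝ → ℝ)
    (hφbdd : ∃ C : ℝ, ∀ x : ℝ, |φ x| ≤ C)
    (hφcont : Continuous φ)
    (hφzero : ∀ x : ℝ, x ∉ Set.Ioo h H → φ x = 0)
    (hφsmooth : ContDiffOn ℝ 2 φ (Set.Ioo h H))
    (hφeq : ∀ x ∈ Set.Ioo h H,
      μ * deriv φ x + σ ^ 2 / 2 * deriv (deriv φ) x +
        lam * (∫ y : ℝ, (φ (x + y) - φ x) * fY y) - (α + ρ) * φ x = 0) :
    ∀ x : ℝ, φ x = 0 := by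
  have h1 := bvp_aux μ σ lam hσ hlam fY hfY0 α ρ hα hρ h H hhH φ
    hφcont hφzero hφsmooth hφeq
  have hnegderiv : deriv (fun z => -φ z) = fun z => -deriv φ z := by
    funext z
    exact deriv.neg
  have h2 := bvp_aux μ σ lam hσ hlam fY hfY0 α ρ hα hρ h H hhH (fun z => -φ z)
    hφcont.neg (fun x hx => by simp [hφzero x hx]) hφsmooth.neg ?_
  · intro x
    have := h1 x
    have := h2 x
    simp only [neg_nonpos] at this
    linarith
  · intro x hx
    have heq := hφeq x hx
    have e1 : deriv (fun z => -φ z) x = -deriv φ x := deriv.neg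
    have e2 : deriv (deriv (fun z => -φ z)) x = -deriv (deriv φ) x := by
      rw [hnegderiv]
      exact deriv.neg
    have e3 : (∫ y : ℝ, (-φ (x + y) - -φ x) * fY y) =
        -∫ y : ℝ, (φ (x + y) - φ x) * fY y := by
      rw [← integral_neg]
      congr 1
      funext y
      ring
    simp only [e1, e2]
    rw [e3]
    linarith
end
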